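/- (Soundness of the infinitary rule.) Let φ, α, β be formulas of a countable predicate language L. If β ⊨ denotes semantic consequence over continuous t-norms, then { φ ∨ (α → βⁿ) : n ∈ ℕ } ⊨ φ ∨ (α → (α & β)), i.e., every safe structure based on a continuous t-norm that is a model of all the formulas φ ∨ (α → βⁿ) (n ∈ ℕ) is a model of φ ∨ (α → (α & β)). -/
import Mathlib


/-- The fact `(0 : ℝ) ≤ 1`, enabling the complete lattice structure on `unitInterval`. -/
instance : Fact ((0:ℝ) ≤ 1) := ⟨zero_le_one⟩

/-- A continuous t-norm: a commutative, associative, monotone binary operation on the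
real unit interval `[0,1]` with unit `1`, continuous w.r.t. the usual topology. -/
structure ContinuousTNorm where
  mul : unitInterval → unitInterval → unitInterval
  mul_comm : ∀ x y, mul x y = mul y x
  mul_assoc : ∀ x y z, mul (mul x y) z = mul x (mul y z)
  mul_mono : ∀ x y z, y ≤ z → mul x y ≤ mul x z
  mul_one : ∀ x, mul x 1 = x
  continuous : Continuous fun p : unitInterval × unitInterval => mul p.1 p.2

/-- `B.pow b n` is the `n`-fold `·`-power of `b`, with `b⁰ = 1`. -/
def ContinuousTNorm.pow (B : ContinuousTNorm) (b : unitInterval) : ℕ → unitInterval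
  | 0 => 1
  | n + 1 => B.mul b (B.pow b n)

/-! ## Syntax of a countable predicate language and the logic `⊢` -/

/-- A countable predicate language: countably many constant symbols and
predicate symbols with arities. (Variables are indexed by `ℕ`.) -/
structure PredLanguage where
  Const : Type
  Pred : Type
  arity : Pred → ℕ
  const_countable : Countable Const
  pred_countable : Countable Pred

variable {L : PredLanguage}

/-- Terms: variables (indexed by `ℕ`) and constants. -/
inductive Term (L : PredLanguage) : Type
  | var : ℕ → Term L
  | const : L.Const → Term L

/-- `t.usesVar x` : the variable `x` occurs in the term `t`. -/
def Term.usesVar (x : ℕ) : Term L → Prop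
  | .var y => y = x
  | .const _ => False

/-- `t.usesConst c` : the constant `c` occurs in the term `t`. -/
def Term.usesConst (c : L.Const) : Term L → Prop
  | .var _ => False
  | .const d => d = c

/-- Substitution of the term `t` for the variable `x` in a term. -/
noncomputable def Term.substVar (x : ℕ) (t : Term L) : Term L → Term L
  | .var y => if y = x then t else .var y
  | .const d => .const d

open Classical in
/-- Replacing every occurrence of the constant `c` by the variable `x` in a term. -/
noncomputable def Term.substConst (c : L.Const) (x : ℕ) : Term L → Term L
  | .var y => .var y
  | .const d => if d = c then .var x else .const d

/-- Formulas of the predicate language `L`: the propositional constant `0̄`, atomic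
predicate formulas, the connectives `→` and `&`, and the quantifiers `∀` and `∃`. -/
inductive Formula (L : PredLanguage) : Type
  | bot : Formula L
  | pred : (P : L.Pred) → (Fin (L.arity P) → Term L) → Formula L
  | imp : Formula L → Formula L → Formula L
  | conj : Formula L → Formula L → Formula L
  | all : ℕ → Formula L → Formula L
  | ex : ℕ → Formula L → Formula L

namespace Formula

/-- `1̄ := 0̄ → 0̄`. -/
def one : Formula L := .imp .bot .bot

/-- `φ ∧ ψ := φ & (φ → ψ)`. -/
def and (φ ψ : Formula L) : Formula L := .conj φ (.imp φ ψ)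

/-- `φ ∨ ψ := ((φ→ψ)→ψ) ∧ ((ψ→φ)→φ)`. -/
def or (φ ψ : Formula L) : Formula L := and (.imp (.imp φ ψ) ψ) (.imp (.imp ψ φ) φ)

/-- `φⁿ`, the `n`-fold `&`-power of `φ`, with `φ⁰ = 1̄`. -/
def pow (φ : Formula L) : ℕ → Formula L
  | 0 => one
  | n + 1 => .conj φ (φ.pow n)

/-- `φ.freeIn x` : the variable `x` occurs free in `φ`. -/
def freeIn (x : ℕ) : Formula L → Prop
  | .bot => False
  | .pred _ ts => ∃ i, (ts i).usesVar x
  | .imp φ ψ => φ.freeIn x ∨ ψ.freeIn x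
  | .conj φ ψ => φ.freeIn x ∨ ψ.freeIn x
  | .all y φ => y ≠ x ∧ φ.freeIn x
  | .ex y φ => y ≠ x ∧ φ.freeIn x

/-- `φ.usesConst c` : the constant `c` occurs in `φ`. -/
def usesConst (c : L.Const) : Formula L → Prop
  | .bot => False
  | .pred _ ts => ∃ i, (ts i).usesConst c
  | .imp φ ψ => φ.usesConst c ∨ ψ.usesConst c
  | .conj φ ψ => φ.usesConst c ∨ ψ.usesConst c
  | .all _ φ => φ.usesConst c
  | .ex _ φ => φ.usesConst c

/-- A sentence is a formula with no free variables. -/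
def IsSentence (φ : Formula L) : Prop := ∀ x, ¬ φ.freeIn x

/-- `φ.substVar x t` : the result of substituting `t` for the free occurrences of `x` in `φ`. -/
noncomputable def substVar (x : ℕ) (t : Term L) : Formula L → Formula L
  | .bot => .bot
  | .pred P ts => .pred P fun i => (ts i).substVar x t
  | .imp φ ψ => .imp (φ.substVar x t) (ψ.substVar x t)
  | .conj φ ψ => .conj (φ.substVar x t) (ψ.substVar x t)
  | .all y φ => if y = x then .all y φ else .all y (φ.substVar x t)
  | .ex y φ => if y = x then .ex y φ else .ex y (φ.substVar x t)

/-- `φ.substConst c x` : the result of replacing every occurrence of the constant `c`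
by the variable `x` in `φ`. -/
noncomputable def substConst (c : L.Const) (x : ℕ) : Formula L → Formula L
  | .bot => .bot
  | .pred P ts => .pred P fun i => (ts i).substConst c x
  | .imp φ ψ => .imp (φ.substConst c x) (ψ.substConst c x)
  | .conj φ ψ => .conj (φ.substConst c x) (ψ.substConst c x)
  | .all y φ => .all y (φ.substConst c x)
  | .ex y φ => .ex y (φ.substConst c x)

/-- `Substitutable x t φ` : the term `t` is substitutable for the variable `x` in `φ`
(no free occurrence of `x` lies in the scope of a quantifier binding a variable of `t`). -/
def Substitutable (x : ℕ) (t : Term L) : Formula L → Prop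
  | .bot => True
  | .pred _ _ => True
  | .imp φ ψ => Substitutable x t φ ∧ Substitutable x t ψ
  | .conj φ ψ => Substitutable x t φ ∧ Substitutable x t ψ
  | .all y φ => ¬ (Formula.all y φ).freeIn x ∨ (¬ t.usesVar y ∧ Substitutable x t φ)
  | .ex y φ => ¬ (Formula.ex y φ).freeIn x ∨ (¬ t.usesVar y ∧ Substitutable x t φ)

end Formula

/-- The axiom schemata of the logic: Hájek's (A1)–(A8), the first-order schemata
(∀1), (∃1), (∀2), (∃2), (Lin), and the schema (RC). -/
inductive IsAxiom : Formula L → Prop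
  | a1 (φ ψ χ : Formula L) : IsAxiom (.imp (.imp φ ψ) (.imp (.imp ψ χ) (.imp φ χ)))
  | a2 (φ ψ : Formula L) : IsAxiom (.imp (.conj φ ψ) φ)
  | a3 (φ ψ : Formula L) : IsAxiom (.imp (.conj φ ψ) (.conj ψ φ))
  | a4 (φ ψ : Formula L) : IsAxiom (.imp (.conj φ (.imp φ ψ)) (.conj ψ (.imp ψ φ)))
  | a5 (φ ψ χ : Formula L) : IsAxiom (.imp (.imp φ (.imp ψ χ)) (.imp (.conj φ ψ) χ))
  | a6 (φ ψ χ : Formula L) : IsAxiom (.imp (.imp (.conj φ ψ) χ) (.imp φ (.imp ψ χ)))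
  | a7 (φ ψ χ : Formula L) :
      IsAxiom (.imp (.imp (.imp φ ψ) χ) (.imp (.imp (.imp ψ φ) χ) χ))
  | a8 (φ : Formula L) : IsAxiom (.imp .bot φ)
  | all1 (φ : Formula L) (x : ℕ) (t : Term L) (h : Formula.Substitutable x t φ) :
      IsAxiom (.imp (.all x φ) (φ.substVar x t))
  | ex1 (φ : Formula L) (x : ℕ) (t : Term L) (h : Formula.Substitutable x t φ) :
      IsAxiom (.imp (φ.substVar x t) (.ex x φ))
  | all2 (φ ψ : Formula L) (x : ℕ) (h : ¬ φ.freeIn x) :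
      IsAxiom (.imp (.all x (.imp φ ψ)) (.imp φ (.all x ψ)))
  | ex2 (φ ψ : Formula L) (x : ℕ) (h : ¬ φ.freeIn x) :
      IsAxiom (.imp (.all x (.imp ψ φ)) (.imp (.ex x ψ) φ))
  | lin (φ ψ : Formula L) (x : ℕ) (h : ¬ φ.freeIn x) :
      IsAxiom (.imp (.all x (ψ.or φ)) ((Formula.all x ψ).or φ))
  | rc (χ : Formula L) (x : ℕ) :
      IsAxiom (.imp (.all x (.conj χ χ)) (.conj (.all x χ) (.all x χ)))

/-- `Deriv Γ φ` (written `Γ ⊢ φ`): `φ` has a (possibly infinite, well-founded,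
i.e. ordinal-indexed) proof from `Γ` using the axioms, Modus Ponens, Generalization,
and the infinitary rule (Inf) for sentences `φ, α, β`. -/
inductive Deriv (Γ : Set (Formula L)) : Formula L → Prop
  | ax {φ : Formula L} : IsAxiom φ → Deriv Γ φ
  | hyp {φ : Formula L} : φ ∈ Γ → Deriv Γ φ
  | mp {φ ψ : Formula L} : Deriv Γ φ → Deriv Γ (.imp φ ψ) → Deriv Γ ψ
  | gen {φ : Formula L} {x : ℕ} : Deriv Γ φ → Deriv Γ (.all x φ)
  | inf {φ α β : Formula L} : φ.IsSentence → α.IsSentence → β.IsSentence →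
      (∀ n : ℕ, Deriv Γ (φ.or (.imp α (β.pow n)))) →
      Deriv Γ (φ.or (.imp α (.conj α β)))

/-! ## Semantics over continuous t-norms -/

/-- The residuum of a continuous t-norm: `x → y = max { z : z · x ≤ y }`. -/
noncomputable def ContinuousTNorm.res (B : ContinuousTNorm) (x y : unitInterval) :
    unitInterval := sSup {z | B.mul z x ≤ y}

/-- A structure for `L` based on a continuous t-norm: a nonempty domain, interpretations
of constants in the domain, and `[0,1]`-valued interpretations of predicates. -/
structure TNStructure (L : PredLanguage) (B : ContinuousTNorm) where
  Dom : Type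
  dom_nonempty : Nonempty Dom
  constInterp : L.Const → Dom
  predInterp : (P : L.Pred) → (Fin (L.arity P) → Dom) → unitInterval

variable {B : ContinuousTNorm}

/-- Value of a term under a valuation. -/
def Term.val (M : TNStructure L B) (v : ℕ → M.Dom) : Term L → M.Dom
  | .var x => v x
  | .const c => M.constInterp c

/-- The truth value `‖φ‖^{M,v} ∈ [0,1]`: `&` is interpreted by the t-norm, `→` by its
residuum, `0̄` by `0`, and `∀x`/`∃x` by the infimum/supremum over all valuations agreeing
with `v` except possibly at `x` (these always exist since `[0,1]` is a complete lattice,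
so every structure is safe). -/
noncomputable def Formula.val (M : TNStructure L B) :
    Formula L → (ℕ → M.Dom) → unitInterval
  | .bot, _ => 0
  | .pred P ts, v => M.predInterp P fun i => (ts i).val M v
  | .imp φ ψ, v => B.res (φ.val M v) (ψ.val M v)
  | .conj φ ψ, v => B.mul (φ.val M v) (ψ.val M v)
  | .all x φ, v => ⨅ d : M.Dom, φ.val M (Function.update v x d)
  | .ex x φ, v => ⨆ d : M.Dom, φ.val M (Function.update v x d)

/-- `M` is a model of the set of formulas `Γ`: every formula of `Γ` takes value `1`
under every valuation. -/
def TNStructure.IsModelOf (M : TNStructure L B) (Γ : Set (Formula L)) : Prop :=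
  ∀ γ ∈ Γ, ∀ v : ℕ → M.Dom, γ.val M v = 1

/-- `Γ ⊨ φ`: every (safe) structure based on a continuous t-norm that is a model of `Γ`
is a model of `φ`. -/
def SemConsequence (Γ : Set (Formula L)) (φ : Formula L) : Prop :=
  ∀ (B : ContinuousTNorm) (M : TNStructure L B), M.IsModelOf Γ → M.IsModelOf {φ}


namespace ContinuousTNorm

variable {B : ContinuousTNorm}

lemma le_one' (x : unitInterval) : x ≤ 1 := x.2.2

lemma zero_le' (x : unitInterval) : (0 : unitInterval) ≤ x := x.2.1

lemma mul_mono' (x : unitInterval) {y z : unitInterval} (h : y ≤ z) :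
    B.mul y x ≤ B.mul z x := by
  rw [B.mul_comm y x, B.mul_comm z x]; exact B.mul_mono x y z h

lemma mul_le_left (x y : unitInterval) : B.mul x y ≤ x := by
  calc B.mul x y ≤ B.mul x 1 := B.mul_mono x y 1 y.2.2
    _ = x := B.mul_one x

lemma mul_le_right (x y : unitInterval) : B.mul x y ≤ y := by
  rw [B.mul_comm]; exact mul_le_left y x

lemma mul_zero (x : unitInterval) : B.mul x 0 = 0 :=
  le_antisymm (mul_le_right x 0) (B.mul x 0).2.1

lemma one_mul (x : unitInterval) : B.mul 1 x = x := by
  rw [B.mul_comm]; exact B.mul_one x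

lemma continuous_mul_left (x : unitInterval) : Continuous fun z => B.mul z x :=
  B.continuous.comp (by continuity : Continuous fun z : unitInterval => (z, x))

lemma sSup_mem_res_set (x y : unitInterval) : B.mul (B.res x y) x ≤ y := by
  have h : sSup {z | B.mul z x ≤ y} ∈ {z | B.mul z x ≤ y} := by
    apply IsClosed.sSup_mem
    · exact ⟨0, by simp only [Set.mem_setOf_eq]; rw [B.mul_comm]; exact (mul_zero x).le.trans (zero_le' y)⟩
    · exact IsClosed.preimage (continuous_mul_left x) isClosed_Iic
  exact h

lemma res_one_iff {x y : unitInterval} : B.res x y = 1 ↔ x ≤ y := by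
  constructor
  · intro h
    have := sSup_mem_res_set (B := B) x y
    rwa [h, one_mul] at this
  · intro h
    refine le_antisymm le_top (le_sSup ?_)
    simp only [Set.mem_setOf_eq, one_mul]; exact h

lemma res_from_one (y : unitInterval) : B.res 1 y = y := by
  have : {z | B.mul z (1 : unitInterval) ≤ y} = Set.Iic y := by
    ext z; simp [B.mul_one]
  rw [ContinuousTNorm.res, this, csSup_Iic]

lemma conj_eq_one_iff {x y : unitInterval} : B.mul x y = 1 ↔ x = 1 ∧ y = 1 := by
  constructor
  · intro h
    constructor
    · exact le_antisymm le_top (h ▸ mul_le_left x y)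
    · exact le_antisymm le_top (h ▸ mul_le_right x y)
  · rintro ⟨rfl, rfl⟩; exact B.mul_one 1

/-- The truth value of `φ ∨ ψ` is 1 iff one of the truth values is 1. -/
lemma or_val_eq_one_iff {x y : unitInterval} :
    B.mul (B.res (B.res x y) y)
      (B.res (B.res (B.res x y) y) (B.res (B.res y x) x)) = 1 ↔ x = 1 ∨ y = 1 := by
  rw [conj_eq_one_iff]
  constructor
  · rintro ⟨h1, h2⟩
    rw [h1, res_from_one] at h2
    rw [res_one_iff] at h1 h2
    rcases le_total x y with h | h
    · right
      exact le_antisymm le_top (le_trans (by rw [res_one_iff.mpr h]) h1)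
    · left
      exact le_antisymm le_top (le_trans (by rw [res_one_iff.mpr h]) h2)
  · rintro (rfl | rfl)
    · have h1 : B.res (B.res 1 y) y = 1 := by
        rw [res_from_one]; exact res_one_iff.mpr le_rfl
      refine ⟨h1, ?_⟩
      rw [h1, res_from_one]
      exact res_one_iff.mpr (le_one' _)
    · have h1 : B.res (B.res x 1) 1 = 1 := res_one_iff.mpr (le_one' _)
      refine ⟨h1, ?_⟩
      rw [h1, res_from_one, res_from_one]
      exact res_one_iff.mpr le_rfl

lemma pow_add (b : unitInterval) (m n : ℕ) :
    B.pow b (m + n) = B.mul (B.pow b m) (B.pow b n) := by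
  induction m with
  | zero => simp [ContinuousTNorm.pow, one_mul]
  | succ m ih =>
    have : m + 1 + n = (m + n) + 1 := by omega
    rw [this]
    show B.mul b (B.pow b (m + n)) = B.mul (B.mul b (B.pow b m)) (B.pow b n)
    rw [ih, B.mul_assoc]

lemma pow_antitone (b : unitInterval) : Antitone (B.pow b) := by
  refine antitone_nat_of_succ_le fun n => ?_
  show B.mul b (B.pow b n) ≤ B.pow b n
  exact mul_le_right b _

/-- Key analytic lemma: if `a ≤ bⁿ` for all `n` then `a ≤ a·b`. -/
lemma le_mul_of_le_pow {a b : unitInterval} (h : ∀ n, a ≤ B.pow b n) :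
    a ≤ B.mul a b := by
  set c : unitInterval := ⨅ n, B.pow b n with hc
  have hac : a ≤ c := le_iInf h
  have hpow1 : B.pow b 1 = b := by
    show B.mul b 1 = b
    exact B.mul_one b
  have hcb : c ≤ b := hpow1 ▸ iInf_le _ 1
  -- c is idempotent
  have hlim : Filter.Tendsto (B.pow b) Filter.atTop (nhds c) :=
    tendsto_atTop_iInf (pow_antitone b)
  have hcc : B.mul c c = c := by
    have h1 : Filter.Tendsto (fun n => B.mul (B.pow b n) (B.pow b n))
        Filter.atTop (nhds (B.mul c c)) := by
      have := B.continuous.tendsto (c, c)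
      exact this.comp (hlim.prodMk_nhds hlim)
    have h2 : Filter.Tendsto (fun n => B.mul (B.pow b n) (B.pow b n))
        Filter.atTop (nhds c) := by
      have heq : (fun n => B.mul (B.pow b n) (B.pow b n)) = fun n => B.pow b (n + n) := by
        funext n; rw [pow_add]
      rw [heq]
      exact hlim.comp (Filter.tendsto_atTop_mono (fun n => Nat.le_add_left n n) Filter.tendsto_id)
    exact tendsto_nhds_unique h1 h2
  -- IVT: find d with c·d = a
  have hcont : Continuous (fun d : unitInterval => B.mul c d) :=
    B.continuous.comp (by continuity : Continuous fun d : unitInterval => (c, d))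
  obtain ⟨d, hd0⟩ : a ∈ Set.range (fun d => B.mul c d) := by
    apply intermediate_value_univ (0 : unitInterval) 1 hcont
    constructor
    · show B.mul c 0 ≤ a
      rw [mul_zero]; exact zero_le' a
    · show a ≤ B.mul c 1
      rw [B.mul_one]; exact hac
  have hd : B.mul c d = a := hd0
  have : B.mul a b = B.mul d (B.mul c b) := by
    rw [← hd, B.mul_comm c d, B.mul_assoc]
  rw [this]
  calc a = B.mul c d := hd.symm
    _ = B.mul d c := B.mul_comm c d
    _ = B.mul d (B.mul c c) := by rw [hcc]
    _ ≤ B.mul d (B.mul c b) := B.mul_mono d _ _ (B.mul_mono c c b hcb)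

end ContinuousTNorm

lemma Formula.val_pow {L : PredLanguage} {B : ContinuousTNorm} (M : TNStructure L B)
    (β : Formula L) (v : ℕ → M.Dom) (n : ℕ) :
    (β.pow n).val M v = B.pow (β.val M v) n := by
  induction n with
  | zero =>
    show B.res 0 0 = 1
    exact ContinuousTNorm.res_one_iff.mpr le_rfl
  | succ n ih =>
    show B.mul (β.val M v) ((β.pow n).val M v) = B.mul (β.val M v) (B.pow (β.val M v) n)
    rw [ih]

lemma Formula.val_or {L : PredLanguage} {B : ContinuousTNorm} (M : TNStructure L B)
    (φ ψ : Formula L) (v : ℕ → M.Dom) :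
    (φ.or ψ).val M v = 1 ↔ φ.val M v = 1 ∨ ψ.val M v = 1 := by
  show B.mul _ _ = 1 ↔ _
  exact ContinuousTNorm.or_val_eq_one_iff

/-- soundness of the infinitary rule: for formulas `φ, α, β`,
`{ φ ∨ (α → βⁿ) : n ∈ ℕ } ⊨ φ ∨ (α → (α & β))` over continuous t-norms. -/
theorem infinitary_rule_sound (L : PredLanguage) (φ α β : Formula L) :
    SemConsequence (Set.range fun n : ℕ => φ.or (.imp α (β.pow n)))
      (φ.or (.imp α (.conj α β))) := by
  intro B M hM γ hγ v
  rw [Set.mem_singleton_iff] at hγ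
  subst hγ
  rw [Formula.val_or]
  by_cases hφ : φ.val M v = 1
  · exact Or.inl hφ
  · right
    have ha : ∀ n : ℕ, B.res (α.val M v) ((β.pow n).val M v) = 1 := by
      intro n
      have := hM _ ⟨n, rfl⟩ v
      rw [Formula.val_or] at this
      rcases this with h | h
      · exact absurd h hφ
      · exact h
    show B.res (α.val M v) (B.mul (α.val M v) (β.val M v)) = 1
    rw [ContinuousTNorm.res_one_iff]
    apply ContinuousTNorm.le_mul_of_le_pow
    intro n
    have := ha n
    rw [Formula.val_pow, ContinuousTNorm.res_one_iff] at this
    exact this
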